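/- With u sorted nonincreasingly, u₀ > 0, γ ≥ 1, and S = {j₁ < ... < j_s} ⊆ [n] with s ≥ γ + 1, define S̄^γ = S ∪ {j_{γ+1}, j_{γ+1}+1, ..., n}. Then the right-hand side of the submodular inequality w ≤ Φ(S̄^γ) − ∑_{j∈S̄^γ} ρ_j(S̄^γ\{j})(1−x_j) + ∑_{j∉S̄^γ} ρ_j(∅)x_j is pointwise (over x ∈ {0,1}^n) at most the right-hand side of w ≤ Φ(S) − ∑_{j∈S} ρ_j(S\{j})(1−x_j) + ∑_{j∉S} ρ_j(∅)x_j; i.e., the S̄^γ-inequality dominates the S-inequality. -/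

import Mathlib

open Finset

/-- The probability function `Φ(S) = max { u(S')/(u(S')+u₀) : S' ⊆ S, |S'| ≤ γ }`. -/
noncomputable def Phi (γ : ℕ) (u : ℕ → ℝ) (u0 : ℝ) (S : Finset ℕ) : ℝ :=
  ((S.powerset.filter fun S' => S'.card ≤ γ).image
      fun S' => (∑ j ∈ S', u j) / ((∑ j ∈ S', u j) + u0)).max'
    (Finset.Nonempty.image ⟨∅, Finset.mem_filter.mpr ⟨Finset.empty_mem_powerset S, by simp⟩⟩ _)

private lemma frac_mono {u0 : ℝ} (hu0 : 0 < u0) {x y : ℝ} (hx : 0 ≤ x) (hxy : x ≤ y) :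
    x / (x + u0) ≤ y / (y + u0) := by
  rw [div_le_div_iff₀ (by linarith) (by linarith)]
  nlinarith

lemma phi_nonneg (γ : ℕ) (u : ℕ → ℝ) (u0 : ℝ) (T : Finset ℕ) : 0 ≤ Phi γ u u0 T := by
  have h : (0:ℝ) ∈ (T.powerset.filter fun S' => S'.card ≤ γ).image
      fun S' => (∑ j ∈ S', u j) / ((∑ j ∈ S', u j) + u0) :=
    Finset.mem_image.mpr ⟨∅, Finset.mem_filter.mpr ⟨Finset.empty_mem_powerset T, by simp⟩,
      by simp⟩
  exact Finset.le_max' _ _ h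

lemma phi_empty (γ : ℕ) (u : ℕ → ℝ) (u0 : ℝ) : Phi γ u u0 ∅ = 0 := by
  refine le_antisymm (Finset.max'_le _ _ _ ?_) (phi_nonneg _ _ _ _)
  intro y hy
  obtain ⟨S', hS', rfl⟩ := Finset.mem_image.mp hy
  have : S' = ∅ :=
    Finset.subset_empty.mp (Finset.mem_powerset.mp (Finset.mem_filter.mp hS').1)
  simp [this]

lemma phi_eq (γ : ℕ) (u : ℕ → ℝ) (u0 : ℝ) (hu0 : 0 < u0) (T A : Finset ℕ)
    (hnnT : ∀ j ∈ T, 0 ≤ u j) (hAT : A ⊆ T) (hA : A.card = γ)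
    (hdom : ∀ a ∈ A, ∀ t ∈ T, t ∉ A → u t ≤ u a) :
    Phi γ u u0 T = (∑ j ∈ A, u j) / ((∑ j ∈ A, u j) + u0) := by
  refine le_antisymm (Finset.max'_le _ _ _ ?_) (Finset.le_max' _ _ ?_)
  · intro y hy
    obtain ⟨S', hS', rfl⟩ := Finset.mem_image.mp hy
    obtain ⟨hsub', hcardS'⟩ := Finset.mem_filter.mp hS'
    have hsub : S' ⊆ T := Finset.mem_powerset.mp hsub'
    have hnnS' : 0 ≤ ∑ j ∈ S', u j := Finset.sum_nonneg fun j hj => hnnT j (hsub hj)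
    refine frac_mono hu0 hnnS' ?_
    by_cases hempty : A \ S' = ∅
    · have hAS' : A ⊆ S' := Finset.sdiff_eq_empty_iff_subset.mp hempty
      have hEq : A = S' := Finset.eq_of_subset_of_card_le hAS' (by omega)
      rw [hEq]
    · have hne : (A \ S').Nonempty := Finset.nonempty_iff_ne_empty.mpr hempty
      set w := (A \ S').inf' hne u with hw
      have hw0 : 0 ≤ w :=
        Finset.le_inf' hne u fun b hb => hnnT b (hAT (Finset.mem_sdiff.mp hb).1)
      have h1 : ∑ j ∈ S' \ A, u j ≤ ((S' \ A).card : ℝ) * w := by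
        have := Finset.sum_le_card_nsmul (S' \ A) u w ?_
        · rwa [nsmul_eq_mul] at this
        · intro t ht
          obtain ⟨htS', htA⟩ := Finset.mem_sdiff.mp ht
          exact Finset.le_inf' hne u fun a ha =>
            hdom a (Finset.mem_sdiff.mp ha).1 t (hsub htS') htA
      have h3 : ((A \ S').card : ℝ) * w ≤ ∑ j ∈ A \ S', u j := by
        have := Finset.card_nsmul_le_sum (A \ S') u w (fun a ha => Finset.inf'_le u ha)
        rwa [nsmul_eq_mul] at this
      have hcards : ((S' \ A).card : ℝ) ≤ ((A \ S').card : ℝ) := by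
        have e1 := Finset.card_sdiff_add_card_inter S' A
        have e2 := Finset.card_sdiff_add_card_inter A S'
        rw [Finset.inter_comm] at e2
        have : (S' \ A).card ≤ (A \ S').card := by omega
        exact_mod_cast this
      have key : ∑ j ∈ S' \ A, u j ≤ ∑ j ∈ A \ S', u j := by nlinarith
      calc ∑ j ∈ S', u j
          = ∑ j ∈ S' ∩ A, u j + ∑ j ∈ S' \ A, u j :=
            (Finset.sum_inter_add_sum_sdiff _ _ _).symm
        _ ≤ ∑ j ∈ A ∩ S', u j + ∑ j ∈ A \ S', u j := by
            rw [Finset.inter_comm]; linarith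
        _ = ∑ j ∈ A, u j := Finset.sum_inter_add_sum_sdiff _ _ _
  · exact Finset.mem_image.mpr
      ⟨A, Finset.mem_filter.mpr ⟨Finset.mem_powerset.mpr hAT, hA.le⟩, rfl⟩

/-- with `S̄^γ = S ∪ {j_{γ+1}, j_{γ+1}+1, …, n}` (where `j_{γ+1}` is the
`(γ+1)`-th smallest element of `S`), the right-hand side of the `S̄^γ`-submodular inequality
(second family) is pointwise, over 0-1 vectors `x`, at most that of the `S`-inequality. -/
theorem stmt_9 (n γ : ℕ) (hγ : 1 ≤ γ) (u : ℕ → ℝ) (u0 : ℝ) (hu0 : 0 < u0)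
    (hnn : ∀ j ∈ Finset.Icc 1 n, 0 ≤ u j)
    (hmono : ∀ j ∈ Finset.Icc 1 n, ∀ k ∈ Finset.Icc 1 n, j ≤ k → u k ≤ u j)
    (S : Finset ℕ) (hS : S ⊆ Finset.Icc 1 n) (hcard : γ + 1 ≤ S.card)
    (Sbar : Finset ℕ) (hSbar : Sbar = S ∪ Finset.Icc ((S.sort (· ≤ ·)).getD γ 0) n)
    (x : ℕ → ℝ) (hx : ∀ j ∈ Finset.Icc 1 n, x j = 0 ∨ x j = 1) :
    Phi γ u u0 Sbar - (∑ j ∈ Sbar, (Phi γ u u0 Sbar - Phi γ u u0 (Sbar.erase j)) * (1 - x j))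
        + ∑ j ∈ Finset.Icc 1 n \ Sbar, (Phi γ u u0 {j} - Phi γ u u0 ∅) * x j
      ≤ Phi γ u u0 S - (∑ j ∈ S, (Phi γ u u0 S - Phi γ u u0 (S.erase j)) * (1 - x j))
        + ∑ j ∈ Finset.Icc 1 n \ S, (Phi γ u u0 {j} - Phi γ u u0 ∅) * x j := by
  classical
  set l := S.sort (· ≤ ·) with hl
  have hlen : l.length = S.card := Finset.length_sort _
  have hγlt : γ < l.length := by omega
  have hslt : l.SortedLT := Finset.sortedLT_sort S
  have hnd : l.Nodup := Finset.sort_nodup S _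
  set m := l.getD γ 0 with hmdef
  have hmget : m = l[γ] := List.getD_eq_getElem l 0 hγlt
  have hmS : m ∈ S := by
    rw [← Finset.mem_sort (α := ℕ) (· ≤ ·), ← hl, hmget]
    exact List.getElem_mem hγlt
  set A := S.filter (· < m) with hA
  have hAS : A ⊆ S := Finset.filter_subset _ _
  have hAeq : A = (l.take γ).toFinset := by
    ext a
    simp only [hA, Finset.mem_filter, List.mem_toFinset]
    constructor
    · rintro ⟨haS, ham⟩
      rw [← Finset.mem_sort (α := ℕ) (· ≤ ·), ← hl, List.mem_iff_getElem] at haS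
      obtain ⟨i, hi, rfl⟩ := haS
      have hiγ : i < γ := by
        by_contra hcon
        push_neg at hcon
        have : l[γ] ≤ l[i] := by
          rcases eq_or_lt_of_le hcon with h | h
          · simp [h]
          · exact le_of_lt (hslt.strictMono_get (show (⟨γ, hγlt⟩ : Fin l.length) < ⟨i, hi⟩ from h))
        rw [hmget] at ham
        omega
      exact List.mem_take_iff_getElem.mpr ⟨i, by omega, rfl⟩
    · intro ha
      obtain ⟨i, hi, rfl⟩ := List.mem_take_iff_getElem.mp ha
      have hiγ : i < γ := lt_of_lt_of_le hi (min_le_left _ _)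
      have hil : i < l.length := lt_of_lt_of_le hi (min_le_right _ _)
      refine ⟨?_, ?_⟩
      · rw [← Finset.mem_sort (α := ℕ) (· ≤ ·), ← hl]
        exact List.getElem_mem hil
      · rw [hmget]
        exact hslt.strictMono_get (show (⟨i, hil⟩ : Fin l.length) < ⟨γ, hγlt⟩ from hiγ)
  have hAcard : A.card = γ := by
    rw [hAeq, List.toFinset_card_of_nodup (hnd.sublist (List.take_sublist γ l)),
      List.length_take]
    omega
  have hAle : ∀ a ∈ A, a ≤ m := fun a ha => le_of_lt (Finset.mem_filter.mp ha).2
  have hmA : m ∉ A := by simp [hA]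
  have hSm : ∀ t ∈ S, t ∉ A → m ≤ t := by
    intro t ht htA
    by_contra hcon
    exact htA (Finset.mem_filter.mpr ⟨ht, by omega⟩)
  have hm1 : 1 ≤ m := (Finset.mem_Icc.mp (hS hmS)).1
  have hmn : m ≤ n := (Finset.mem_Icc.mp (hS hmS)).2
  have hSSbar : S ⊆ Sbar := by rw [hSbar]; exact Finset.subset_union_left
  have hSbarIcc : Sbar ⊆ Finset.Icc 1 n := by
    rw [hSbar]
    exact Finset.union_subset hS (Finset.Icc_subset_Icc hm1 le_rfl)
  have hSbarm : ∀ t ∈ Sbar, t ∉ A → m ≤ t := by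
    intro t ht htA
    rw [hSbar, Finset.mem_union] at ht
    rcases ht with h | h
    · exact hSm t h htA
    · exact (Finset.mem_Icc.mp h).1
  -- general computation of Phi via a dominating base set
  have key : ∀ (T B : Finset ℕ), T ⊆ Finset.Icc 1 n → B ⊆ T → B.card = γ →
      (∀ a ∈ B, a ≤ m) → (∀ t ∈ T, t ∉ B → m ≤ t) →
      Phi γ u u0 T = (∑ j ∈ B, u j) / ((∑ j ∈ B, u j) + u0) := by
    intro T B hT hBT hBc hBle hTm
    refine phi_eq γ u u0 hu0 T B (fun j hj => hnn j (hT hj)) hBT hBc ?_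
    intro a ha t ht htB
    exact hmono a (hT (hBT ha)) t (hT ht) ((hBle a ha).trans (hTm t ht htB))
  have hPhiS : Phi γ u u0 S = (∑ j ∈ A, u j) / ((∑ j ∈ A, u j) + u0) :=
    key S A hS hAS hAcard hAle hSm
  have hPhiSbar : Phi γ u u0 Sbar = (∑ j ∈ A, u j) / ((∑ j ∈ A, u j) + u0) :=
    key Sbar A hSbarIcc (hAS.trans hSSbar) hAcard hAle hSbarm
  -- erase lemmas
  have herase : ∀ j ∈ S, Phi γ u u0 (Sbar.erase j) = Phi γ u u0 (S.erase j) := by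
    intro j hj
    by_cases hjA : j ∈ A
    · set B := insert m (A.erase j) with hB
      have hmAe : m ∉ A.erase j := fun h => hmA (Finset.mem_of_mem_erase h)
      have hBc : B.card = γ := by
        rw [hB, Finset.card_insert_of_notMem hmAe, Finset.card_erase_of_mem hjA, hAcard]
        omega
      have hmj : m ≠ j := fun h => hmA (h ▸ hjA)
      have hBle : ∀ a ∈ B, a ≤ m := by
        intro a ha
        rcases Finset.mem_insert.mp ha with rfl | h
        · exact le_rfl
        · exact hAle a (Finset.mem_of_mem_erase h)
      have hBnotA : ∀ t, t ≠ j → t ∉ B → t ∉ A := by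
        intro t htj htB htA
        exact htB (Finset.mem_insert.mpr (Or.inr (Finset.mem_erase.mpr ⟨htj, htA⟩)))
      have h1 : Phi γ u u0 (Sbar.erase j) = (∑ k ∈ B, u k) / ((∑ k ∈ B, u k) + u0) := by
        refine key (Sbar.erase j) B ((Finset.erase_subset _ _).trans hSbarIcc) ?_ hBc hBle ?_
        · intro a ha
          rcases Finset.mem_insert.mp ha with rfl | h
          · exact Finset.mem_erase.mpr ⟨hmj, hSSbar hmS⟩
          · exact Finset.erase_subset_erase j (hAS.trans hSSbar) h
        · intro t ht htB
          obtain ⟨htj, htSbar⟩ := Finset.mem_erase.mp ht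
          exact hSbarm t htSbar (hBnotA t htj htB)
      have h2 : Phi γ u u0 (S.erase j) = (∑ k ∈ B, u k) / ((∑ k ∈ B, u k) + u0) := by
        refine key (S.erase j) B ((Finset.erase_subset _ _).trans hS) ?_ hBc hBle ?_
        · intro a ha
          rcases Finset.mem_insert.mp ha with rfl | h
          · exact Finset.mem_erase.mpr ⟨hmj, hmS⟩
          · exact Finset.erase_subset_erase j hAS h
        · intro t ht htB
          obtain ⟨htj, htS⟩ := Finset.mem_erase.mp ht
          exact hSm t htS (hBnotA t htj htB)
      rw [h1, h2]
    · have hAsub1 : A ⊆ Sbar.erase j := fun a ha =>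
        Finset.mem_erase.mpr ⟨fun h => hjA (h ▸ ha), hSSbar (hAS ha)⟩
      have hAsub2 : A ⊆ S.erase j := fun a ha =>
        Finset.mem_erase.mpr ⟨fun h => hjA (h ▸ ha), hAS ha⟩
      have h1 : Phi γ u u0 (Sbar.erase j) = (∑ k ∈ A, u k) / ((∑ k ∈ A, u k) + u0) := by
        refine key (Sbar.erase j) A ((Finset.erase_subset _ _).trans hSbarIcc) hAsub1 hAcard
          hAle ?_
        intro t ht htA
        exact hSbarm t (Finset.mem_of_mem_erase ht) htA
      have h2 : Phi γ u u0 (S.erase j) = (∑ k ∈ A, u k) / ((∑ k ∈ A, u k) + u0) := by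
        refine key (S.erase j) A ((Finset.erase_subset _ _).trans hS) hAsub2 hAcard hAle ?_
        intro t ht htA
        exact hSm t (Finset.mem_of_mem_erase ht) htA
      rw [h1, h2]
  have hzero : ∀ j ∈ Sbar, j ∉ S → Phi γ u u0 Sbar - Phi γ u u0 (Sbar.erase j) = 0 := by
    intro j hj hjS
    have hjA : j ∉ A := fun h => hjS (hAS h)
    have h1 : Phi γ u u0 (Sbar.erase j) = (∑ k ∈ A, u k) / ((∑ k ∈ A, u k) + u0) := by
      refine key (Sbar.erase j) A ((Finset.erase_subset _ _).trans hSbarIcc) ?_ hAcard hAle ?_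
      · intro a ha
        exact Finset.mem_erase.mpr ⟨fun h => hjA (h ▸ ha), hSSbar (hAS ha)⟩
      · intro t ht htA
        exact hSbarm t (Finset.mem_of_mem_erase ht) htA
    rw [h1, hPhiSbar]
    ring
  have hsum1 : ∑ j ∈ Sbar, (Phi γ u u0 Sbar - Phi γ u u0 (Sbar.erase j)) * (1 - x j)
      = ∑ j ∈ S, (Phi γ u u0 S - Phi γ u u0 (S.erase j)) * (1 - x j) := by
    rw [← Finset.sum_subset hSSbar (fun j hj hjS => by rw [hzero j hj hjS, zero_mul])]
    refine Finset.sum_congr rfl fun j hj => ?_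
    rw [herase j hj, hPhiS, hPhiSbar]
  have hsum2 : ∑ j ∈ Finset.Icc 1 n \ Sbar, (Phi γ u u0 {j} - Phi γ u u0 ∅) * x j
      ≤ ∑ j ∈ Finset.Icc 1 n \ S, (Phi γ u u0 {j} - Phi γ u u0 ∅) * x j := by
    refine Finset.sum_le_sum_of_subset_of_nonneg
      (Finset.sdiff_subset_sdiff (Finset.Subset.refl _) hSSbar) ?_
    intro j hj _
    have hjIcc : j ∈ Finset.Icc 1 n := (Finset.mem_sdiff.mp hj).1
    have hx0 : 0 ≤ x j := by rcases hx j hjIcc with h | h <;> rw [h] <;> norm_num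
    have hphi : 0 ≤ Phi γ u u0 {j} - Phi γ u u0 ∅ := by
      rw [phi_empty]
      simpa using phi_nonneg γ u u0 {j}
    exact mul_nonneg hphi hx0
  have hPhiEq : Phi γ u u0 Sbar = Phi γ u u0 S := by rw [hPhiS, hPhiSbar]
  rw [hsum1, hPhiEq]
  linarith
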